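/- arXiv:1301.2192 — 4 statements merged into one kernel-verified Lean document; each statement's English description precedes it below -/
import Mathlib

section
/- Let κ = {B ∈ h : B(E^⊥) ⊆ E}, where h is the Lie algebra of H = Isom(X, Φ|_X) (i.e., B* = −B with respect to Φ|_X). Define Γ₁ : κ → Hom(W', E) by Γ₁(B) = B ξ*, and Γ₂ : Hom(W', E) → h by Γ₂(A) = A(ξξ*)^{-1}ξ − ξ*(ξξ*)^{-1}A*. Then Γ₂ takes values in κ, Γ₁ ∘ Γ₂ = id on Hom(W', E), and the sequence 0 → h^{E^⊥} → κ → Hom(W', E) → 0 (with the inclusion and Γ₁) is exact. In particular dim κ = dim h^{E^⊥} + (dim E)(dim W). -/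
section

variable (F : Type*) [Field F]
variable (W W' X : Type*)
variable [AddCommGroup W] [Module F W] [AddCommGroup W'] [Module F W']
variable [AddCommGroup X] [Module F X]

/-- The Lie algebra `𝔥` of `H = Isom(X, Φ)`: skew operators `B` (`B* = −B`). -/
def skewSet (Φ : X →ₗ[F] X →ₗ[F] F) : Submodule F (X →ₗ[F] X) where
  carrier := {B | ∀ x y : X, Φ (B x) y + Φ x (B y) = 0}
  zero_mem' := by intro x y; simp
  add_mem' := by
    intro B C hB hC x y
    simp only [LinearMap.add_apply, map_add, LinearMap.add_apply]
    linear_combination hB x y + hC x y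
  smul_mem' := by
    intro c B hB x y
    simp only [LinearMap.smul_apply, map_smul, LinearMap.smul_apply, smul_eq_mul]
    linear_combination c * hB x y

/-- `κ = {B ∈ 𝔥 : B(E^⊥) ⊆ E}` where `E = ker ξ`. -/
def kappaSet (Φ : X →ₗ[F] X →ₗ[F] F) (ξ : X →ₗ[F] W) : Submodule F (X →ₗ[F] X) where
  carrier := {B | (∀ x y : X, Φ (B x) y + Φ x (B y) = 0) ∧
      ∀ x : X, (∀ y ∈ LinearMap.ker ξ, Φ x y = 0) → B x ∈ LinearMap.ker ξ}
  zero_mem' := by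
    refine ⟨by intro x y; simp, by intro x _; simp⟩
  add_mem' := by
    intro B C hB hC
    refine ⟨?_, ?_⟩
    · intro x y
      simp only [LinearMap.add_apply, map_add, LinearMap.add_apply]
      linear_combination hB.1 x y + hC.1 x y
    · intro x hx
      exact Submodule.add_mem _ (hB.2 x hx) (hC.2 x hx)
  smul_mem' := by
    intro c B hB
    refine ⟨?_, ?_⟩
    · intro x y
      simp only [LinearMap.smul_apply, map_smul, LinearMap.smul_apply, smul_eq_mul]
      linear_combination c * hB.1 x y
    · intro x hx
      exact Submodule.smul_mem _ c (hB.2 x hx)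

/-- `𝔥^{E^⊥} = {B ∈ 𝔥 : B|_{E^⊥} = 0}` where `E = ker ξ`. -/
def hEperpSet (Φ : X →ₗ[F] X →ₗ[F] F) (ξ : X →ₗ[F] W) : Submodule F (X →ₗ[F] X) where
  carrier := {B | (∀ x y : X, Φ (B x) y + Φ x (B y) = 0) ∧
      ∀ x : X, (∀ y ∈ LinearMap.ker ξ, Φ x y = 0) → B x = 0}
  zero_mem' := by
    refine ⟨by intro x y; simp, by intro x _; simp⟩
  add_mem' := by
    intro B C hB hC
    refine ⟨?_, ?_⟩
    · intro x y
      simp only [LinearMap.add_apply, map_add, LinearMap.add_apply]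
      linear_combination hB.1 x y + hC.1 x y
    · intro x hx
      simp [LinearMap.add_apply, hB.2 x hx, hC.2 x hx]
  smul_mem' := by
    intro c B hB
    refine ⟨?_, ?_⟩
    · intro x y
      simp only [LinearMap.smul_apply, map_smul, LinearMap.smul_apply, smul_eq_mul]
      linear_combination c * hB.1 x y
    · intro x hx
      simp [LinearMap.smul_apply, hB.2 x hx]

end

set_option synthInstance.maxHeartbeats 1000000 in
/-- The exact sequence for `κ`: with `Γ₁(B) = B ξ*` and
`Γ₂(A) = A (ξξ*)⁻¹ ξ − ξ* (ξξ*)⁻¹ A*`, the map `Γ₂` takes values in `κ`, `Γ₁ ∘ Γ₂ = id`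
on `Hom(W', E)`, and `0 → 𝔥^{E^⊥} → κ → Hom(W', E) → 0` is exact; in particular
`dim κ = dim 𝔥^{E^⊥} + (dim E)(dim W)`. -/
theorem kappa_exact_sequence
    (F : Type*) [Field F] (hchar : (2 : F) ≠ 0)
    (W W' X : Type*)
    [AddCommGroup W] [Module F W] [FiniteDimensional F W]
    [AddCommGroup W'] [Module F W'] [FiniteDimensional F W']
    [AddCommGroup X] [Module F X] [FiniteDimensional F X]
    (ε : F) (hε : ε = 1 ∨ ε = -1)
    (Bp : W' →ₗ[F] W →ₗ[F] F)
    (hBp1 : ∀ w' : W', (∀ w : W, Bp w' w = 0) → w' = 0)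
    (hBp2 : ∀ w : W, (∀ w' : W', Bp w' w = 0) → w = 0)
    (Φ : X →ₗ[F] X →ₗ[F] F)
    (hΦnd : ∀ x : X, (∀ y : X, Φ x y = 0) → x = 0)
    (hΦε : ∀ x y : X, Φ x y = ε * Φ y x)
    (ξ : X →ₗ[F] W) (hξsurj : Function.Surjective ξ)
    (hEnd : ∀ x ∈ LinearMap.ker ξ, (∀ y ∈ LinearMap.ker ξ, Φ x y = 0) → x = 0)
    (ξs : W' →ₗ[F] X)
    (hξs : ∀ (w' : W') (x : X), Φ (ξs w') x = Bp w' (ξ x))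
    (υ : W →ₗ[F] W')
    (hυ1 : ∀ w : W, ξ (ξs (υ w)) = w) (hυ2 : ∀ w' : W', υ (ξ (ξs w')) = w') :
    -- Γ₁ maps κ into Hom(W', E) :
    (∀ B ∈ kappaSet F W X Φ ξ, ∀ w' : W', B (ξs w') ∈ LinearMap.ker ξ) ∧
    -- Γ₂ takes values in κ and Γ₁ ∘ Γ₂ = id :
    (∀ (A : W' →ₗ[F] X), (∀ w' : W', A w' ∈ LinearMap.ker ξ) →
      ∀ As : X →ₗ[F] W, (∀ (w' : W') (x : X), Φ (A w') x = Bp w' (As x)) →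
        (A ∘ₗ υ ∘ₗ ξ - ξs ∘ₗ υ ∘ₗ As) ∈ kappaSet F W X Φ ξ ∧
          ∀ w' : W', (A ∘ₗ υ ∘ₗ ξ - ξs ∘ₗ υ ∘ₗ As) (ξs w') = A w') ∧
    -- the kernel of Γ₁ on κ is 𝔥^{E^⊥} :
    (∀ B ∈ kappaSet F W X Φ ξ,
      ((∀ w' : W', B (ξs w') = 0) ↔ B ∈ hEperpSet F W X Φ ξ)) ∧
    -- Γ₁ is surjective onto Hom(W', E) :
    (∀ (A : W' →ₗ[F] X), (∀ w' : W', A w' ∈ LinearMap.ker ξ) →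
      ∃ B ∈ kappaSet F W X Φ ξ, ∀ w' : W', B (ξs w') = A w') ∧
    -- the dimension count :
    Module.finrank F ↥(kappaSet F W X Φ ξ) =
      Module.finrank F ↥(hEperpSet F W X Φ ξ) +
        Module.finrank F ↥(LinearMap.ker ξ) * Module.finrank F W := by
  
  classical
  have mem_kappa : ∀ B : X →ₗ[F] X, B ∈ kappaSet F W X Φ ξ ↔
      ((∀ x y : X, Φ (B x) y + Φ x (B y) = 0) ∧
        ∀ x : X, (∀ y ∈ LinearMap.ker ξ, Φ x y = 0) → B x ∈ LinearMap.ker ξ) :=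
    fun B => Iff.rfl
  have mem_hE : ∀ B : X →ₗ[F] X, B ∈ hEperpSet F W X Φ ξ ↔
      ((∀ x y : X, Φ (B x) y + Φ x (B y) = 0) ∧
        ∀ x : X, (∀ y ∈ LinearMap.ker ξ, Φ x y = 0) → B x = 0) :=
    fun B => Iff.rfl
  have hξsE : ∀ (w' : W') (y : X), y ∈ LinearMap.ker ξ → Φ (ξs w') y = 0 := by
    intro w' y hy
    rw [LinearMap.mem_ker] at hy
    rw [hξs, hy, map_zero]
  have hperp : ∀ w' : W', ∀ y ∈ LinearMap.ker ξ, Φ (ξs w') y = 0 :=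
    fun w' y hy => hξsE w' y hy
  have hPker : ∀ x : X, x - ξs (υ (ξ x)) ∈ LinearMap.ker ξ := by
    intro x
    simp [LinearMap.mem_ker, hυ1]
  have hrepr : ∀ x : X, (∀ y ∈ LinearMap.ker ξ, Φ x y = 0) → x = ξs (υ (ξ x)) := by
    intro x hx
    have h1 : x - ξs (υ (ξ x)) = 0 := by
      refine hEnd _ (hPker x) ?_
      intro y hy
      have h2 := hξsE (υ (ξ x)) y hy
      have h3 := hx y hy
      simp [map_sub, LinearMap.sub_apply, h2, h3]
    exact sub_eq_zero.mp h1
  have hsymm : ∀ a b : X, Φ (ξs (υ (ξ a))) b = ε * Φ (ξs (υ (ξ b))) a := by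
    intro a b
    have h1 := hξsE (υ (ξ a)) _ (hPker b)
    have h2 := hξsE (υ (ξ b)) _ (hPker a)
    have h3 := hΦε (ξs (υ (ξ a))) (ξs (υ (ξ b)))
    simp only [map_sub] at h1 h2
    linear_combination h1 + h3 - ε * h2
  have hBpW : ∀ u v : W, Bp (υ u) v = ε * Bp (υ v) u := by
    intro u v
    obtain ⟨a, rfl⟩ := hξsurj u
    obtain ⟨b, rfl⟩ := hξsurj v
    rw [← hξs, ← hξs]
    exact hsymm a b
  have part1 : ∀ B ∈ kappaSet F W X Φ ξ, ∀ w' : W', B (ξs w') ∈ LinearMap.ker ξ := by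
    intro B hB w'
    exact ((mem_kappa B).mp hB).2 (ξs w') (hperp w')
  have part2 : ∀ (A : W' →ₗ[F] X), (∀ w' : W', A w' ∈ LinearMap.ker ξ) →
      ∀ As : X →ₗ[F] W, (∀ (w' : W') (x : X), Φ (A w') x = Bp w' (As x)) →
        (A ∘ₗ υ ∘ₗ ξ - ξs ∘ₗ υ ∘ₗ As) ∈ kappaSet F W X Φ ξ ∧
          ∀ w' : W', (A ∘ₗ υ ∘ₗ ξ - ξs ∘ₗ υ ∘ₗ As) (ξs w') = A w' := by
    intro A hA As hAs
    have hAs0 : ∀ x : X, (∀ y ∈ LinearMap.ker ξ, Φ x y = 0) → As x = 0 := by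
      intro x hx
      refine hBp2 _ ?_
      intro w'
      rw [← hAs w' x, hΦε (A w') x, hx (A w') (hA w'), mul_zero]
    have hAsξs : ∀ w' : W', As (ξs w') = 0 := by
      intro w'
      refine hBp2 _ ?_
      intro u
      have h := LinearMap.mem_ker.mp (hA u)
      rw [← hAs u (ξs w'), hΦε (A u) (ξs w'), hξs w' (A u), h, map_zero, mul_zero]
    constructor
    · rw [mem_kappa]
      constructor
      · intro x y
        have e1 := hAs (υ (ξ x)) y
        have e2 := hξs (υ (As x)) y
        have e3 := hΦε x (A (υ (ξ y)))
        have e5 := hAs (υ (ξ y)) x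
        have e4 := hΦε x (ξs (υ (As y)))
        have e6 := hξs (υ (As y)) x
        have s1 := hBpW (ξ x) (As y)
        have s2 := hBpW (As x) (ξ y)
        simp only [LinearMap.sub_apply, LinearMap.comp_apply, map_sub]
        linear_combination e1 - e2 + e3 + ε * e5 - e4 - ε * e6 + s1 - s2
      · intro x hx
        have h0 := hAs0 x hx
        have h1 := LinearMap.mem_ker.mp (hA (υ (ξ x)))
        simp [LinearMap.mem_ker, LinearMap.sub_apply, LinearMap.comp_apply, map_sub,
          h0, h1]
    · intro w'
      simp [LinearMap.sub_apply, LinearMap.comp_apply, hυ2, hAsξs]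
  have part3 : ∀ B ∈ kappaSet F W X Φ ξ,
      ((∀ w' : W', B (ξs w') = 0) ↔ B ∈ hEperpSet F W X Φ ξ) := by
    intro B hB
    constructor
    · intro h0
      rw [mem_hE]
      refine ⟨((mem_kappa B).mp hB).1, ?_⟩
      intro x hx
      rw [hrepr x hx]
      exact h0 _
    · intro hBE w'
      exact ((mem_hE B).mp hBE).2 (ξs w') (hperp w')
  have hυinj : Function.Injective υ := by
    intro w1 w2 h
    have := congrArg (fun w' => ξ (ξs w')) h
    simpa [hυ1] using this
  have hυsurj : Function.Surjective υ := fun w' => ⟨ξ (ξs w'), hυ2 w'⟩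
  have hWW' : Module.finrank F W = Module.finrank F W' :=
    (LinearEquiv.ofBijective υ ⟨hυinj, hυsurj⟩).finrank_eq
  have hflipinj : Function.Injective Bp.flip := by
    intro w1 w2 h
    have h2 : ∀ w', Bp w' (w1 - w2) = 0 := by
      intro w'
      have := LinearMap.congr_fun h w'
      simp only [LinearMap.flip_apply] at this
      rw [map_sub, this, sub_self]
    exact sub_eq_zero.mp (hBp2 _ h2)
  have hfinr : Module.finrank F W = Module.finrank F (Module.Dual F W') := by
    rw [Subspace.dual_finrank_eq]; exact hWW'
  have hflipsurj : Function.Surjective Bp.flip :=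
    (LinearMap.injective_iff_surjective_of_finrank_eq_finrank hfinr).mp hflipinj
  have part4 : ∀ (A : W' →ₗ[F] X), (∀ w' : W', A w' ∈ LinearMap.ker ξ) →
      ∃ B ∈ kappaSet F W X Φ ξ, ∀ w' : W', B (ξs w') = A w' := by
    intro A hA
    let e := LinearEquiv.ofBijective Bp.flip ⟨hflipinj, hflipsurj⟩
    let g : X →ₗ[F] (W' →ₗ[F] F) := (LinearMap.lcomp F F A).comp Φ.flip
    let As : X →ₗ[F] W := e.symm.toLinearMap ∘ₗ g
    have hAs : ∀ (w' : W') (x : X), Φ (A w') x = Bp w' (As x) := by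
      intro w' x
      have h1 : Bp.flip (As x) = g x := e.apply_symm_apply (g x)
      exact (LinearMap.congr_fun h1 w').symm
    obtain ⟨hC1, hC2⟩ := part2 A hA As hAs
    exact ⟨_, hC1, hC2⟩
  have hle : hEperpSet F W X Φ ξ ≤ kappaSet F W X Φ ξ := by
    intro B hB
    rw [mem_hE] at hB
    rw [mem_kappa]
    exact ⟨hB.1, fun x hx => by rw [hB.2 x hx]; exact Submodule.zero_mem _⟩
  set κ := kappaSet F W X Φ ξ with hκ
  let Γ : (X →ₗ[F] X) →ₗ[F] (W' →ₗ[F] X) := LinearMap.lcomp F X ξs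
  let D := Γ.domRestrict κ
  have hD := LinearMap.finrank_range_add_finrank_ker D
  have hDapp : ∀ (B : X →ₗ[F] X) (hB : B ∈ κ) (w' : W'),
      D ⟨B, hB⟩ w' = B (ξs w') := fun B hB w' => rfl
  have hkerD : LinearMap.ker D = Submodule.comap κ.subtype (hEperpSet F W X Φ ξ) := by
    ext B
    obtain ⟨B, hB⟩ := B
    simp only [LinearMap.mem_ker, Submodule.mem_comap, Submodule.coe_subtype]
    constructor
    · intro h
      refine (part3 B hB).mp ?_
      intro w'
      have := LinearMap.congr_fun h w'
      rw [hDapp B hB w'] at this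
      simpa using this
    · intro h
      ext w'
      rw [hDapp B hB w']
      simpa using (part3 B hB).mpr h w'
  have hfk : Module.finrank F ↥(LinearMap.ker D) =
      Module.finrank F ↥(hEperpSet F W X Φ ξ) := by
    rw [hkerD]
    exact (Submodule.comapSubtypeEquivOfLe hle).finrank_eq
  let L : (W' →ₗ[F] ↥(LinearMap.ker ξ)) →ₗ[F] (W' →ₗ[F] X) :=
    LinearMap.llcomp F W' ↥(LinearMap.ker ξ) X (LinearMap.ker ξ).subtype
  have hLinj : Function.Injective L := by
    intro A1 A2 h
    ext w'
    have h' : ((A1 w' : X)) = ((A2 w' : X)) := LinearMap.congr_fun h w'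
    exact h'
  have hrangeD : LinearMap.range D = LinearMap.range L := by
    ext A
    constructor
    · rintro ⟨⟨B, hB⟩, rfl⟩
      refine ⟨LinearMap.codRestrict (LinearMap.ker ξ) (D ⟨B, hB⟩)
        (fun w' => ?_), ?_⟩
      · rw [hDapp B hB w']
        exact part1 B hB w'
      · ext w'
        rfl
    · rintro ⟨A0, rfl⟩
      obtain ⟨B, hB, hB2⟩ := part4 (L A0) (fun w' => (A0 w').2)
      refine ⟨⟨B, hB⟩, ?_⟩
      ext w'
      rw [hDapp B hB w']
      exact hB2 w'
  have hfr : Module.finrank F ↥(LinearMap.range D) =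
      Module.finrank F ↥(LinearMap.ker ξ) * Module.finrank F W := by
    rw [hrangeD, LinearMap.finrank_range_of_inj hLinj, Module.finrank_linearMap,
      ← hWW', Nat.mul_comm]
  refine ⟨part1, part2, part3, part4, ?_⟩
  rw [← hD, hfk, hfr]
  omega
end

section
/- The Lie algebra h of H = Isom(X, Φ|_X) decomposes as a direct sum h = h^E ⊕ h^{E^⊥} ⊕ im Γ₂, where h^E = {B ∈ h : B(E) = 0 and B(E^⊥) ⊆ E^⊥}, h^{E^⊥} is defined analogously, and Γ₂ : Hom(W', E) → κ ⊆ h is the section Γ₂(A) = A(ξξ*)^{-1}ξ − ξ*(ξξ*)^{-1}A*. -/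
/-- The decomposition `𝔥 = 𝔥^E ⊕ 𝔥^{E^⊥} ⊕ im Γ₂` of the Lie algebra of
`H = Isom(X, Φ)`, where `𝔥^E` (resp. `𝔥^{E^⊥}`) consists of skew operators vanishing on
`E = ker ξ` and preserving `E^⊥` (resp. vice versa), and
`Γ₂(A) = A (ξξ*)⁻¹ ξ − ξ* (ξξ*)⁻¹ A*` for `A ∈ Hom(W', E)`.  Every skew `C` decomposes
uniquely as a sum of elements of the three pieces. -/
theorem h_decomposition
    (F : Type*) [Field F] (hchar : (2 : F) ≠ 0)
    (W W' X : Type*)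
    [AddCommGroup W] [Module F W] [FiniteDimensional F W]
    [AddCommGroup W'] [Module F W'] [FiniteDimensional F W']
    [AddCommGroup X] [Module F X] [FiniteDimensional F X]
    (ε : F) (hε : ε = 1 ∨ ε = -1)
    (Bp : W' →ₗ[F] W →ₗ[F] F)
    (hBp1 : ∀ w' : W', (∀ w : W, Bp w' w = 0) → w' = 0)
    (hBp2 : ∀ w : W, (∀ w' : W', Bp w' w = 0) → w = 0)
    (Φ : X →ₗ[F] X →ₗ[F] F)
    (hΦnd : ∀ x : X, (∀ y : X, Φ x y = 0) → x = 0)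
    (hΦε : ∀ x y : X, Φ x y = ε * Φ y x)
    (ξ : X →ₗ[F] W) (hξsurj : Function.Surjective ξ)
    (hEnd : ∀ x ∈ LinearMap.ker ξ, (∀ y ∈ LinearMap.ker ξ, Φ x y = 0) → x = 0)
    (ξs : W' →ₗ[F] X)
    (hξs : ∀ (w' : W') (x : X), Φ (ξs w') x = Bp w' (ξ x))
    (υ : W →ₗ[F] W')
    (hυ1 : ∀ w : W, ξ (ξs (υ w)) = w) (hυ2 : ∀ w' : W', υ (ξ (ξs w')) = w') :
    -- abbreviations: skewness, membership in 𝔥^E, 𝔥^{E^⊥}, and im Γ₂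
    ∀ C : X →ₗ[F] X, (∀ x y : X, Φ (C x) y + Φ x (C y) = 0) →
      (∃ B₁ B₂ B₃ : X →ₗ[F] X,
        -- B₁ ∈ 𝔥^E
        ((∀ x y : X, Φ (B₁ x) y + Φ x (B₁ y) = 0) ∧
          (∀ e ∈ LinearMap.ker ξ, B₁ e = 0) ∧
          (∀ x : X, (∀ y ∈ LinearMap.ker ξ, Φ x y = 0) →
            ∀ y ∈ LinearMap.ker ξ, Φ (B₁ x) y = 0)) ∧
        -- B₂ ∈ 𝔥^{E^⊥}
        ((∀ x y : X, Φ (B₂ x) y + Φ x (B₂ y) = 0) ∧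
          (∀ x : X, (∀ y ∈ LinearMap.ker ξ, Φ x y = 0) → B₂ x = 0) ∧
          (∀ e ∈ LinearMap.ker ξ, B₂ e ∈ LinearMap.ker ξ)) ∧
        -- B₃ ∈ im Γ₂
        (∃ (A : W' →ₗ[F] X) (As : X →ₗ[F] W),
          (∀ w' : W', A w' ∈ LinearMap.ker ξ) ∧
          (∀ (w' : W') (x : X), Φ (A w') x = Bp w' (As x)) ∧
          B₃ = A ∘ₗ υ ∘ₗ ξ - ξs ∘ₗ υ ∘ₗ As) ∧
        C = B₁ + B₂ + B₃) ∧
      -- uniqueness of the decomposition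
      (∀ B₁ B₂ B₃ B₁' B₂' B₃' : X →ₗ[F] X,
        ((∀ x y : X, Φ (B₁ x) y + Φ x (B₁ y) = 0) ∧
          (∀ e ∈ LinearMap.ker ξ, B₁ e = 0) ∧
          (∀ x : X, (∀ y ∈ LinearMap.ker ξ, Φ x y = 0) →
            ∀ y ∈ LinearMap.ker ξ, Φ (B₁ x) y = 0)) →
        ((∀ x y : X, Φ (B₁' x) y + Φ x (B₁' y) = 0) ∧
          (∀ e ∈ LinearMap.ker ξ, B₁' e = 0) ∧
          (∀ x : X, (∀ y ∈ LinearMap.ker ξ, Φ x y = 0) →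
            ∀ y ∈ LinearMap.ker ξ, Φ (B₁' x) y = 0)) →
        ((∀ x y : X, Φ (B₂ x) y + Φ x (B₂ y) = 0) ∧
          (∀ x : X, (∀ y ∈ LinearMap.ker ξ, Φ x y = 0) → B₂ x = 0) ∧
          (∀ e ∈ LinearMap.ker ξ, B₂ e ∈ LinearMap.ker ξ)) →
        ((∀ x y : X, Φ (B₂' x) y + Φ x (B₂' y) = 0) ∧
          (∀ x : X, (∀ y ∈ LinearMap.ker ξ, Φ x y = 0) → B₂' x = 0) ∧
          (∀ e ∈ LinearMap.ker ξ, B₂' e ∈ LinearMap.ker ξ)) →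
        (∃ (A : W' →ₗ[F] X) (As : X →ₗ[F] W),
          (∀ w' : W', A w' ∈ LinearMap.ker ξ) ∧
          (∀ (w' : W') (x : X), Φ (A w') x = Bp w' (As x)) ∧
          B₃ = A ∘ₗ υ ∘ₗ ξ - ξs ∘ₗ υ ∘ₗ As) →
        (∃ (A : W' →ₗ[F] X) (As : X →ₗ[F] W),
          (∀ w' : W', A w' ∈ LinearMap.ker ξ) ∧
          (∀ (w' : W') (x : X), Φ (A w') x = Bp w' (As x)) ∧
          B₃' = A ∘ₗ υ ∘ₗ ξ - ξs ∘ₗ υ ∘ₗ As) →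
        B₁ + B₂ + B₃ = B₁' + B₂' + B₃' →
        B₁ = B₁' ∧ B₂ = B₂' ∧ B₃ = B₃') := by
  intro C hC
  -- the projection onto E^⊥ along E
  set P : X →ₗ[F] X := ξs ∘ₗ υ ∘ₗ ξ with hPdef
  have hPx : ∀ x : X, P x = ξs (υ (ξ x)) := fun x => rfl
  have hξP : ∀ x : X, ξ (P x) = ξ x := fun x => hυ1 _
  have hPξs : ∀ w' : W', P (ξs w') = ξs w' := by
    intro w'; rw [hPx, hυ2]
  have hPP : ∀ x : X, P (P x) = P x := by
    intro x; rw [hPx (P x), hξP, ← hPx]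
  have hPE : ∀ e ∈ LinearMap.ker ξ, P e = 0 := by
    intro e he
    rw [LinearMap.mem_ker] at he
    rw [hPx, he, map_zero, map_zero]
  -- self-adjointness of P
  have hΦP1 : ∀ x y : X, Φ (P x) y = Φ (P x) (P y) := by
    intro x y
    rw [hPx x, hξs, ← hξP y, ← hξs, ← hPx]
  have hΦP2 : ∀ x y : X, Φ x (P y) = Φ (P x) (P y) := by
    intro x y
    have h := hΦP1 y x
    rw [hΦε x (P y), h, hΦε (P x) (P y)]
  have hPsa : ∀ x y : X, Φ (P x) y = Φ x (P y) := by
    intro x y; rw [hΦP1 x y, hΦP2 x y]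
  -- Φ (P x) vanishes on E
  have hPperp : ∀ (x : X), ∀ y ∈ LinearMap.ker ξ, Φ (P x) y = 0 := by
    intro x y hy
    rw [hΦP1, hPE y hy, map_zero]
  -- elements perpendicular to E are fixed by P
  have hperpP : ∀ z : X, (∀ y ∈ LinearMap.ker ξ, Φ z y = 0) → P z = z := by
    intro z hz
    have hk : z - P z ∈ LinearMap.ker ξ := by
      rw [LinearMap.mem_ker, map_sub, hξP, sub_self]
    have h0 : z - P z = 0 := by
      refine hEnd _ hk ?_
      intro y hy
      rw [map_sub, LinearMap.sub_apply, hz y hy, hPperp z y hy, sub_self]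
    exact (sub_eq_zero.mp h0).symm
  -- x - P x lies in E
  have hQE : ∀ x : X, x - P x ∈ LinearMap.ker ξ := by
    intro x
    rw [LinearMap.mem_ker, map_sub, hξP, sub_self]
  constructor
  · -- EXISTENCE
    set Q : X →ₗ[F] X := LinearMap.id - P with hQdef
    have hQx : ∀ x : X, Q x = x - P x := fun x => rfl
    refine ⟨P ∘ₗ C ∘ₗ P, Q ∘ₗ C ∘ₗ Q,
      (Q ∘ₗ C ∘ₗ ξs) ∘ₗ υ ∘ₗ ξ - ξs ∘ₗ υ ∘ₗ (-(ξ ∘ₗ C ∘ₗ Q)), ?_, ?_, ?_, ?_⟩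
    · -- B₁ ∈ 𝔥^E
      refine ⟨?_, ?_, ?_⟩
      · intro x y
        simp only [LinearMap.comp_apply]
        rw [hPsa (C (P x)) y, ← hPsa x (C (P y))]
        exact hC (P x) (P y)
      · intro e he
        simp only [LinearMap.comp_apply, hPE e he, map_zero]
      · intro x _ y hy
        simp only [LinearMap.comp_apply]
        exact hPperp _ y hy
    · -- B₂ ∈ 𝔥^{E^⊥}
      have hQsa : ∀ x y : X, Φ (Q x) y = Φ x (Q y) := by
        intro x y
        simp only [hQx, map_sub, LinearMap.sub_apply, hPsa]
      refine ⟨?_, ?_, ?_⟩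
      · intro x y
        simp only [LinearMap.comp_apply]
        rw [hQsa (C (Q x)) y, ← hQsa x (C (Q y))]
        exact hC (Q x) (Q y)
      · intro x hx
        have : Q x = 0 := by rw [hQx, hperpP x hx, sub_self]
        simp only [LinearMap.comp_apply, this, map_zero]
      · intro e _
        simp only [LinearMap.comp_apply, LinearMap.mem_ker, hQx, map_sub, hξP, sub_self]
    · -- B₃ ∈ im Γ₂
      refine ⟨Q ∘ₗ C ∘ₗ ξs, -(ξ ∘ₗ C ∘ₗ Q), ?_, ?_, rfl⟩
      · intro w'
        simp only [LinearMap.comp_apply, LinearMap.mem_ker, hQx, map_sub, hξP, sub_self]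
      · intro w' x
        simp only [LinearMap.comp_apply, LinearMap.neg_apply]
        have h1 : Φ (Q (C (ξs w'))) x = Φ (C (ξs w')) (Q x) := by
          simp only [hQx, map_sub, LinearMap.sub_apply, hPsa]
        rw [h1]
        have h2 : Φ (C (ξs w')) (Q x) = -Φ (ξs w') (C (Q x)) := by
          have := hC (ξs w') (Q x)
          linear_combination this
        rw [h2, hξs, map_neg]
    · -- the sum is C
      ext x
      simp only [LinearMap.add_apply, LinearMap.comp_apply, LinearMap.sub_apply,
        LinearMap.neg_apply, map_neg, hQx, map_sub, ← hPx]
      abel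
  · -- UNIQUENESS
    intro B₁ B₂ B₃ B₁' B₂' B₃' h1 h1' h2 h2' h3 h3' heq
    -- key compression lemmas
    have key1 : ∀ (B₁ B₂ B₃ : X →ₗ[F] X),
        ((∀ x y : X, Φ (B₁ x) y + Φ x (B₁ y) = 0) ∧
          (∀ e ∈ LinearMap.ker ξ, B₁ e = 0) ∧
          (∀ x : X, (∀ y ∈ LinearMap.ker ξ, Φ x y = 0) →
            ∀ y ∈ LinearMap.ker ξ, Φ (B₁ x) y = 0)) →
        ((∀ x y : X, Φ (B₂ x) y + Φ x (B₂ y) = 0) ∧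
          (∀ x : X, (∀ y ∈ LinearMap.ker ξ, Φ x y = 0) → B₂ x = 0) ∧
          (∀ e ∈ LinearMap.ker ξ, B₂ e ∈ LinearMap.ker ξ)) →
        (∃ (A : W' →ₗ[F] X) (As : X →ₗ[F] W),
          (∀ w' : W', A w' ∈ LinearMap.ker ξ) ∧
          (∀ (w' : W') (x : X), Φ (A w') x = Bp w' (As x)) ∧
          B₃ = A ∘ₗ υ ∘ₗ ξ - ξs ∘ₗ υ ∘ₗ As) →
        ∀ x : X, P ((B₁ + B₂ + B₃) (P x)) = B₁ x := by
      intro B₁ B₂ B₃ h1 h2 h3 x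
      obtain ⟨A, As, hA, hAAs, hB₃⟩ := h3
      have hB1P : B₁ (P x) = B₁ x := by
        have := h1.2.1 (x - P x) (hQE x)
        rw [map_sub] at this
        have := sub_eq_zero.mp this
        exact this.symm
      have hPB1 : P (B₁ (P x)) = B₁ (P x) :=
        hperpP _ (h1.2.2 (P x) (hPperp x))
      have hB2P : B₂ (P x) = 0 := h2.2.1 (P x) (hPperp x)
      have hAsP : As (P x) = 0 := by
        refine hBp2 _ fun w' => ?_
        rw [← hAAs, ← hPsa (A w') x, hPE _ (hA w')]
        simp
      have hB3P : P (B₃ (P x)) = 0 := by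
        rw [hB₃]
        simp only [LinearMap.sub_apply, LinearMap.comp_apply, hAsP, map_zero, map_sub, sub_zero]
        have := hPE (A (υ (ξ (P x)))) (hA _)
        rw [this]
      have h5 : (B₁ + B₂ + B₃) (P x) = B₁ (P x) + B₂ (P x) + B₃ (P x) := rfl
      rw [h5, map_add, map_add, hB3P, add_zero, hB2P, map_zero, add_zero, hPB1, hB1P]
    have key2 : ∀ (B₁ B₂ B₃ : X →ₗ[F] X),
        ((∀ x y : X, Φ (B₁ x) y + Φ x (B₁ y) = 0) ∧
          (∀ e ∈ LinearMap.ker ξ, B₁ e = 0) ∧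
          (∀ x : X, (∀ y ∈ LinearMap.ker ξ, Φ x y = 0) →
            ∀ y ∈ LinearMap.ker ξ, Φ (B₁ x) y = 0)) →
        ((∀ x y : X, Φ (B₂ x) y + Φ x (B₂ y) = 0) ∧
          (∀ x : X, (∀ y ∈ LinearMap.ker ξ, Φ x y = 0) → B₂ x = 0) ∧
          (∀ e ∈ LinearMap.ker ξ, B₂ e ∈ LinearMap.ker ξ)) →
        (∃ (A : W' →ₗ[F] X) (As : X →ₗ[F] W),
          (∀ w' : W', A w' ∈ LinearMap.ker ξ) ∧
          (∀ (w' : W') (x : X), Φ (A w') x = Bp w' (As x)) ∧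
          B₃ = A ∘ₗ υ ∘ₗ ξ - ξs ∘ₗ υ ∘ₗ As) →
        ∀ x : X, (fun z => z - P z) ((B₁ + B₂ + B₃) (x - P x)) = B₂ x := by
      intro B₁ B₂ B₃ h1 h2 h3 x
      obtain ⟨A, As, hA, hAAs, hB₃⟩ := h3
      have hB1Q : B₁ (x - P x) = 0 := h1.2.1 _ (hQE x)
      have hB2Q : B₂ (x - P x) = B₂ x := by
        rw [map_sub, h2.2.1 (P x) (hPperp x), sub_zero]
      have hPB2 : P (B₂ x) = 0 := by
        rw [← hB2Q]; exact hPE _ (h2.2.2 _ (hQE x))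
      have hB3Q : B₃ (x - P x) - P (B₃ (x - P x)) = 0 := by
        rw [hB₃]
        have hξQ : ξ (x - P x) = 0 := by rw [map_sub, hξP, sub_self]
        simp only [LinearMap.sub_apply, LinearMap.comp_apply, hξQ, map_zero, zero_sub,
          map_neg, hPξs, sub_self, neg_sub]
      have h4 : B₃ (x - P x) = P (B₃ (x - P x)) := sub_eq_zero.mp hB3Q
      show (B₁ + B₂ + B₃) (x - P x) - P ((B₁ + B₂ + B₃) (x - P x)) = B₂ x
      have h5 : (B₁ + B₂ + B₃) (x - P x) = B₁ (x - P x) + B₂ (x - P x) + B₃ (x - P x) := rfl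
      rw [h5, hB1Q, zero_add, hB2Q, map_add, hPB2, zero_add, ← h4]
      abel
    have e1 : B₁ = B₁' := by
      ext x
      rw [← key1 B₁ B₂ B₃ h1 h2 h3 x, ← key1 B₁' B₂' B₃' h1' h2' h3' x, heq]
    have e2 : B₂ = B₂' := by
      ext x
      rw [← key2 B₁ B₂ B₃ h1 h2 h3 x, ← key2 B₁' B₂' B₃' h1' h2' h3' x, heq]
    refine ⟨e1, e2, ?_⟩
    have : B₁ + B₂ + B₃ = B₁ + B₂ + B₃' := by rw [heq, e1, e2]
    exact add_left_cancel this
end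

section
/- Define φ : m → n by φ(A, B) = u(Aξ, ξBξ*), where m = gl(W) ⊕ h is the Lie algebra of M and n = {u(A₀,B₀) : A₀ : X → W, B₀ : W' → W with B₀* + B₀ = 0} is the Lie algebra of the unipotent radical N. Let n_ξ = {u(A₀, B₀) ∈ n : E ⊆ ker A₀}, and let i₂ : κ → m be B ↦ (0, B) with κ = {B ∈ h : B(E^⊥) ⊆ E}. Then the sequence 0 → κ → m → n_ξ → 0 (with maps i₂ and φ) is exact: φ is surjective onto n_ξ with kernel exactly i₂(κ). -/
/-- The exact sequence for `𝔪`: the map `φ : 𝔪 → 𝔫`, `φ(A, B) = u(A ξ, ξ B ξ*)`, from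
the Lie algebra `𝔪 = 𝔤𝔩(W) ⊕ 𝔥` of the Levi to the Lie algebra `𝔫` of the unipotent
radical, has image exactly `𝔫_ξ = {u(A₀, B₀) ∈ 𝔫 : E ⊆ ker A₀}` and kernel exactly
`i₂(κ) = {(0, B) : B ∈ κ}`, i.e. `0 → κ → 𝔪 → 𝔫_ξ → 0` is exact.  An element
`u(A₀, B₀)` of `𝔫` is a pair with `B₀* + B₀ = 0`, the skewness being
`Bp w₁' (B₀ w₂') + ε Bp w₂' (B₀ w₁') = 0`. -/
theorem m_exact_sequence
    (F : Type*) [Field F] (hchar : (2 : F) ≠ 0)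
    (W W' X : Type*)
    [AddCommGroup W] [Module F W] [FiniteDimensional F W]
    [AddCommGroup W'] [Module F W'] [FiniteDimensional F W']
    [AddCommGroup X] [Module F X] [FiniteDimensional F X]
    (ε : F) (hε : ε = 1 ∨ ε = -1)
    (Bp : W' →ₗ[F] W →ₗ[F] F)
    (hBp1 : ∀ w' : W', (∀ w : W, Bp w' w = 0) → w' = 0)
    (hBp2 : ∀ w : W, (∀ w' : W', Bp w' w = 0) → w = 0)
    (Φ : X →ₗ[F] X →ₗ[F] F)
    (hΦnd : ∀ x : X, (∀ y : X, Φ x y = 0) → x = 0)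
    (hΦε : ∀ x y : X, Φ x y = ε * Φ y x)
    (ξ : X →ₗ[F] W) (hξsurj : Function.Surjective ξ)
    (hEnd : ∀ x ∈ LinearMap.ker ξ, (∀ y ∈ LinearMap.ker ξ, Φ x y = 0) → x = 0)
    (ξs : W' →ₗ[F] X)
    (hξs : ∀ (w' : W') (x : X), Φ (ξs w') x = Bp w' (ξ x)) :
    -- φ maps 𝔪 into 𝔫_ξ : the second component is skew and the first kills E
    (∀ (A : W →ₗ[F] W) (B : X →ₗ[F] X),
      (∀ x y : X, Φ (B x) y + Φ x (B y) = 0) →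
      (∀ w₁' w₂' : W',
        Bp w₁' ((ξ ∘ₗ B ∘ₗ ξs) w₂') + ε * Bp w₂' ((ξ ∘ₗ B ∘ₗ ξs) w₁') = 0) ∧
      (∀ e ∈ LinearMap.ker ξ, (A ∘ₗ ξ) e = 0)) ∧
    -- the kernel of φ is i₂(κ)
    (∀ (A : W →ₗ[F] W) (B : X →ₗ[F] X),
      (∀ x y : X, Φ (B x) y + Φ x (B y) = 0) →
      ((A ∘ₗ ξ = 0 ∧ ξ ∘ₗ B ∘ₗ ξs = 0) ↔
        (A = 0 ∧ ∀ x : X, (∀ y ∈ LinearMap.ker ξ, Φ x y = 0) →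
          B x ∈ LinearMap.ker ξ))) ∧
    -- φ is surjective onto 𝔫_ξ
    (∀ (A₀ : X →ₗ[F] W) (B₀ : W' →ₗ[F] W),
      (∀ w₁' w₂' : W', Bp w₁' (B₀ w₂') + ε * Bp w₂' (B₀ w₁') = 0) →
      (∀ e ∈ LinearMap.ker ξ, A₀ e = 0) →
      ∃ (A : W →ₗ[F] W) (B : X →ₗ[F] X),
        (∀ x y : X, Φ (B x) y + Φ x (B y) = 0) ∧
        A₀ = A ∘ₗ ξ ∧ B₀ = ξ ∘ₗ B ∘ₗ ξs) := by
  have hε2 : ε * ε = 1 := by rcases hε with h | h <;> simp [h]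
  refine ⟨?_, ?_, ?_⟩
  · -- Part 1
    intro A B hB
    constructor
    · intro w₁' w₂'
      have h1 : Bp w₁' ((ξ ∘ₗ B ∘ₗ ξs) w₂') = Φ (ξs w₁') (B (ξs w₂')) := by
        simp [LinearMap.comp_apply, hξs]
      have h2 : Bp w₂' ((ξ ∘ₗ B ∘ₗ ξs) w₁') = Φ (ξs w₂') (B (ξs w₁')) := by
        simp [LinearMap.comp_apply, hξs]
      rw [h1, h2]
      linear_combination hΦε (ξs w₁') (B (ξs w₂')) + ε * hB (ξs w₂') (ξs w₁')
    · intro e he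
      simp [LinearMap.comp_apply, LinearMap.mem_ker.mp he]
  · -- Part 2 : kernel
    intro A B hB
    constructor
    · rintro ⟨hA, hBξ⟩
      constructor
      · ext w
        obtain ⟨x, rfl⟩ := hξsurj w
        simpa using LinearMap.ext_iff.mp hA x
      · intro x hx
        rw [LinearMap.mem_ker]
        apply hBp2
        intro w'
        have h1 : Bp w' (ξ (B x)) = Φ (ξs w') (B x) := (hξs w' (B x)).symm
        have h2 : B (ξs w') ∈ LinearMap.ker ξ := by
          rw [LinearMap.mem_ker]
          simpa [LinearMap.comp_apply] using LinearMap.ext_iff.mp hBξ w'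
        have h3 : Φ x (B (ξs w')) = 0 := hx _ h2
        have h4 := hΦε (B (ξs w')) x
        rw [h3, mul_zero] at h4
        have h5 := hB (ξs w') x
        rw [h1]
        linear_combination h5 - h4
    · rintro ⟨rfl, hB2⟩
      refine ⟨LinearMap.zero_comp ξ, ?_⟩
      ext w'
      have hmem : ∀ y ∈ LinearMap.ker ξ, Φ (ξs w') y = 0 := by
        intro y hy
        rw [hξs, LinearMap.mem_ker.mp hy, map_zero]
      simpa [LinearMap.comp_apply] using LinearMap.mem_ker.mp (hB2 (ξs w') hmem)
  · -- Part 3 : surjectivity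
    intro A₀ B₀ hskew hker
    -- section of ξ
    obtain ⟨s, hs⟩ := ξ.exists_rightInverse_of_surjective
      (LinearMap.range_eq_top.mpr hξsurj)
    -- left inverse of ξs (which is injective)
    have hξsker : LinearMap.ker ξs = ⊥ := by
      rw [LinearMap.ker_eq_bot']
      intro w' hw'
      apply hBp1
      intro w
      obtain ⟨x, rfl⟩ := hξsurj w
      rw [← hξs, hw', map_zero, LinearMap.zero_apply]
    obtain ⟨p, hp⟩ := ξs.exists_leftInverse_of_injective hξsker
    -- the bilinear form β(x,y) = ε * Bp (p y) (B₀ (p x))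
    set β : X →ₗ[F] X →ₗ[F] F :=
      ε • (((Bp.flip.comp B₀).comp p).compl₂ p) with hβdef
    have hβ : ∀ x y : X, β x y = ε * Bp (p y) (B₀ (p x)) := by
      intro x y
      simp [hβdef, LinearMap.compl₂_apply, LinearMap.comp_apply]
    -- Φ as a map to the dual is a linear equivalence
    have hΦinj : Function.Injective Φ := by
      rw [← LinearMap.ker_eq_bot, LinearMap.ker_eq_bot']
      intro x hx
      exact hΦnd x fun y => by rw [hx]; rfl
    have hfr : Module.finrank F X = Module.finrank F (Module.Dual F X) :=
      Subspace.dual_finrank_eq.symm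
    let e : X ≃ₗ[F] Module.Dual F X := LinearMap.linearEquivOfInjective Φ hΦinj hfr
    have he : ∀ x : X, e x = Φ x := fun x =>
      LinearMap.linearEquivOfInjective_apply hΦinj hfr x
    set B : X →ₗ[F] X := (e.symm : Module.Dual F X →ₗ[F] X).comp β with hBdef
    have hΦB : ∀ x y : X, Φ (B x) y = β x y := by
      intro x y
      have : Φ (B x) = β x := by
        rw [← he (B x)]
        show e (e.symm (β x)) = β x
        exact e.apply_symm_apply (β x)
      rw [this]
    have hpξs : ∀ w' : W', p (ξs w') = w' := fun w' => by
      simpa [LinearMap.comp_apply] using LinearMap.ext_iff.mp hp w'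
    refine ⟨A₀ ∘ₗ s, B, ?_, ?_, ?_⟩
    · -- skewness of B
      intro x y
      have h1 : Φ (B x) y = ε * Bp (p y) (B₀ (p x)) := by rw [hΦB, hβ]
      have h2 : Φ (B y) x = ε * Bp (p x) (B₀ (p y)) := by rw [hΦB, hβ]
      have h3 := hΦε x (B y)
      rw [h2] at h3
      rw [h1, h3]
      linear_combination ε * hskew (p y) (p x) + Bp (p x) (B₀ (p y)) * hε2 - Bp (p x) (B₀ (p y)) * hε2
    · -- A₀ = (A₀ ∘ s) ∘ ξ
      ext x
      have h1 : ξ (s (ξ x)) = ξ x := by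
        simpa [LinearMap.comp_apply] using LinearMap.ext_iff.mp hs (ξ x)
      have h2 : s (ξ x) - x ∈ LinearMap.ker ξ := by
        rw [LinearMap.mem_ker, map_sub, h1, sub_self]
      have h3 := hker _ h2
      rw [map_sub] at h3
      simp only [LinearMap.comp_apply]
      rw [sub_eq_zero] at h3
      exact h3.symm
    · -- B₀ = ξ ∘ B ∘ ξs
      ext w'
      simp only [LinearMap.comp_apply]
      have key : ∀ w₁' : W', Bp w₁' (B₀ w' - ξ (B (ξs w'))) = 0 := by
        intro w₁'
        have h1 : Bp w₁' (ξ (B (ξs w'))) = Φ (ξs w₁') (B (ξs w')) :=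
          (hξs w₁' (B (ξs w'))).symm
        have h2 : Φ (ξs w₁') (B (ξs w')) = ε * Φ (B (ξs w')) (ξs w₁') :=
          hΦε _ _
        have h3 : Φ (B (ξs w')) (ξs w₁') = ε * Bp (p (ξs w₁')) (B₀ (p (ξs w'))) := by
          rw [hΦB, hβ]
        rw [hpξs, hpξs] at h3
        rw [map_sub, h1, h2, h3]
        linear_combination (-(Bp w₁' (B₀ w'))) * hε2
      have := hBp2 _ key
      rw [sub_eq_zero] at this
      exact this
end

section
/- With all notation as above, the map ψ : n → Hom(W', E), u(A₀, B₀) ↦ P_E ∘ A₀*, is a surjective linear map with kernel n_ξ, and the map ψ̃ : Hom(W', E) → n, A ↦ u(A* P_E, 0), is a linear section of ψ. Hence 0 → n_ξ → n → Hom(W', E) → 0 is a split exact sequence and n = n_ξ ⊕ im ψ̃. -/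
/-- The split exact sequence for `𝔫`: the map `ψ : 𝔫 → Hom(W', E)`,
`u(A₀, B₀) ↦ P_E ∘ A₀*`, is surjective with kernel `𝔫_ξ`, and
`ψ̃ : A ↦ u(A* P_E, 0)` is a linear section of it; hence
`0 → 𝔫_ξ → 𝔫 → Hom(W', E) → 0` is split exact and `𝔫 = 𝔫_ξ ⊕ im ψ̃`. -/
theorem n_split_exact_sequence
    (F : Type*) [Field F] (hchar : (2 : F) ≠ 0)
    (W W' X : Type*)
    [AddCommGroup W] [Module F W] [FiniteDimensional F W]
    [AddCommGroup W'] [Module F W'] [FiniteDimensional F W']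
    [AddCommGroup X] [Module F X] [FiniteDimensional F X]
    (ε : F) (hε : ε = 1 ∨ ε = -1)
    (Bp : W' →ₗ[F] W →ₗ[F] F)
    (hBp1 : ∀ w' : W', (∀ w : W, Bp w' w = 0) → w' = 0)
    (hBp2 : ∀ w : W, (∀ w' : W', Bp w' w = 0) → w = 0)
    (Φ : X →ₗ[F] X →ₗ[F] F)
    (hΦnd : ∀ x : X, (∀ y : X, Φ x y = 0) → x = 0)
    (hΦε : ∀ x y : X, Φ x y = ε * Φ y x)
    (ξ : X →ₗ[F] W) (hξsurj : Function.Surjective ξ)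
    (hEnd : ∀ x ∈ LinearMap.ker ξ, (∀ y ∈ LinearMap.ker ξ, Φ x y = 0) → x = 0)
    (ξs : W' →ₗ[F] X)
    (hξs : ∀ (w' : W') (x : X), Φ (ξs w') x = Bp w' (ξ x))
    (PE PEo : X →ₗ[F] X)
    (hPsum : PE + PEo = LinearMap.id)
    (hPE1 : ∀ x : X, PE x ∈ LinearMap.ker ξ)
    (hPE2 : ∀ x ∈ LinearMap.ker ξ, PE x = x)
    (hPEo : ∀ x : X, ∀ y ∈ LinearMap.ker ξ, Φ (PEo x) y = 0) :
    -- ψ has kernel 𝔫_ξ, and the splitting identity ψ̃(ψ(u)) corresponds to A₀ ∘ P_E :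
    (∀ (A₀ : X →ₗ[F] W) (B₀ : W' →ₗ[F] W),
      (∀ w₁' w₂' : W', Bp w₁' (B₀ w₂') + ε * Bp w₂' (B₀ w₁') = 0) →
      ∀ A₀s : W' →ₗ[F] X, (∀ (w' : W') (x : X), Φ (A₀s w') x = Bp w' (A₀ x)) →
        ((∀ w' : W', PE (A₀s w') = 0) ↔ ∀ e ∈ LinearMap.ker ξ, A₀ e = 0) ∧
        (∀ (w' : W') (x : X), Φ (PE (A₀s w')) x = Bp w' (A₀ (PE x)))) ∧
    -- ψ̃ is a section of ψ : for A ∈ Hom(W', E) with adjoint As, the adjoint Cs of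
    -- C = A* ∘ P_E satisfies P_E ∘ Cs = A
    (∀ (A : W' →ₗ[F] X), (∀ w' : W', A w' ∈ LinearMap.ker ξ) →
      ∀ As : X →ₗ[F] W, (∀ (w' : W') (x : X), Φ (A w') x = Bp w' (As x)) →
      ∀ Cs : W' →ₗ[F] X, (∀ (w' : W') (x : X), Φ (Cs w') x = Bp w' (As (PE x))) →
        ∀ w' : W', PE (Cs w') = A w') := by
  have hdecomp : ∀ x : X, PE x + PEo x = x := by
    intro x
    have h := congrArg (fun f : X →ₗ[F] X => f x) hPsum
    simpa using h
  have key : ∀ a x : X, Φ (PE a) x = Φ a (PE x) := by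
    intro a x
    have h1 : Φ (PE a) x = Φ (PE a) (PE x) + Φ (PE a) (PEo x) := by
      conv_lhs => rw [← hdecomp x]
      simp
    have h2 : Φ (PE a) (PEo x) = 0 := by
      rw [hΦε, hPEo x (PE a) (hPE1 a), mul_zero]
    have h3 : Φ a (PE x) = Φ (PE a) (PE x) + Φ (PEo a) (PE x) := by
      conv_lhs => rw [← hdecomp a]
      simp
    have h4 : Φ (PEo a) (PE x) = 0 := hPEo a (PE x) (hPE1 x)
    rw [h1, h2, h3, h4]
  have keyR : ∀ a x : X, a ∈ LinearMap.ker ξ → Φ a (PE x) = Φ a x := by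
    intro a x ha
    have h1 : Φ a x = Φ a (PE x) + Φ a (PEo x) := by
      conv_lhs => rw [← hdecomp x]; simp
    have h2 : Φ a (PEo x) = 0 := by
      rw [hΦε, hPEo x a ha, mul_zero]
    rw [h1, h2, add_zero]
  constructor
  · intro A₀ B₀ hB₀ A₀s hA₀s
    constructor
    · constructor
      · intro h e he
        apply hBp2
        intro w'
        rw [← hA₀s w' e]
        calc Φ (A₀s w') e = Φ (PE (A₀s w') + PEo (A₀s w')) e := by rw [hdecomp]
          _ = Φ (PE (A₀s w')) e + Φ (PEo (A₀s w')) e := by simp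
          _ = 0 := by rw [h w', hPEo _ e he]; simp
      · intro h w'
        apply hEnd _ (hPE1 _)
        intro y hy
        rw [key, hPE2 y hy, hA₀s, h y hy, map_zero]
    · intro w' x
      rw [key, hA₀s]
  · intro A hA As hAs Cs hCs w'
    have hCA : Cs w' = A w' := by
      have hz : Cs w' - A w' = 0 := by
        apply hΦnd
        intro y
        have e1 : Φ (A w') y = Bp w' (As (PE y)) := by
          rw [← keyR (A w') y (hA w'), hAs]
        have : Φ (Cs w' - A w') y = Φ (Cs w') y - Φ (A w') y := by simp
        rw [this, hCs, e1, sub_self]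
      have := sub_eq_zero.mp hz
      exact this
    rw [hCA, hPE2 _ (hA w')]
end
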